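/- For ξ ∈ F^× with Nm_{F/k}(ξ) ∈ μ_{m/n}(k), the assignment θ ↦ ξθ (and identity on F) extends to a well-defined F-algebra automorphism μ_ξ of A_β, and μ_ξ restricts on the center L_β = k[b] (b the image of θ^n) to the automorphism b ↦ Nm_{F/k}(ξ)·b. -/

import Mathlib

open Finset

section Aux

variable {k F A : Type*} [Field k] [Field F] [Algebra k F] [Ring A] [Algebra k A]

private def nuP (ζ : F ≃ₐ[k] F) (ξ : F) (t : ℕ) : F := ∏ j ∈ Finset.range t, (ζ ^ j) ξ

private lemma nuP_add (ζ : F ≃ₐ[k] F) (ξ : F) (s t : ℕ) :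
    nuP ζ ξ (s + t) = nuP ζ ξ s * (ζ ^ s) (nuP ζ ξ t) := by
  simp only [nuP, Finset.prod_range_add, map_prod]
  congr 1
  refine Finset.prod_congr rfl fun j _ => ?_
  rw [pow_add]
  rfl

private lemma theta_pow_mul (ζ : F ≃ₐ[k] F) (ι : F →ₐ[k] A) (θ : A)
    (hθa : ∀ a : F, θ * ι a = ι (ζ a) * θ) (t : ℕ) (b : F) :
    θ ^ t * ι b = ι ((ζ ^ t) b) * θ ^ t := by
  induction t with
  | zero => simp
  | succ t ih =>
    rw [pow_succ', mul_assoc, ih, ← mul_assoc, hθa, mul_assoc, ← pow_succ']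
    congr 2
    rw [pow_succ']
    rfl

private lemma exists_hom
    (ζ : F ≃ₐ[k] F) (m : ℕ) (hm : 0 < m) (hζm : ζ ^ m = 1)
    (β : k)
    (ι : F →ₐ[k] A) (θ : A)
    (hθa : ∀ a : F, θ * ι a = ι (ζ a) * θ)
    (hθm : θ ^ m = algebraMap k A β)
    (hbasis : ∀ x : A, ∃! c : Fin m → F, x = ∑ i : Fin m, ι (c i) * θ ^ (i : ℕ))
    (ξ : F) (hν : nuP ζ ξ m = 1) :
    ∃ g : A →ₐ[k] A, ∀ (a : F) (t : ℕ), g (ι a * θ ^ t) = ι (a * nuP ζ ξ t) * θ ^ t := by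
  -- periodicity of nuP
  have hmul : ∀ q : ℕ, nuP ζ ξ (m * q) = 1 := by
    intro q
    induction q with
    | zero => simp [nuP]
    | succ q ih =>
      rw [Nat.mul_succ, nuP_add, ih, one_mul, hν, map_one]
  have hper : ∀ t : ℕ, nuP ζ ξ t = nuP ζ ξ (t % m) := by
    intro t
    conv_lhs => rw [← Nat.div_add_mod t m]
    rw [nuP_add, hmul, one_mul, pow_mul, hζm, one_pow]
    rfl
  -- coordinates
  have coordfun : ∀ x : A, ∃ c : Fin m → F, x = ∑ i : Fin m, ι (c i) * θ ^ (i : ℕ) :=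
    fun x => (hbasis x).exists
  classical
  set c : A → Fin m → F := fun x => (coordfun x).choose with hc_def
  have hc : ∀ x : A, x = ∑ i : Fin m, ι (c x i) * θ ^ (i : ℕ) := fun x => (coordfun x).choose_spec
  have hcu : ∀ (x : A) (d : Fin m → F), x = ∑ i : Fin m, ι (d i) * θ ^ (i : ℕ) → d = c x :=
    fun x d h => (hbasis x).unique h (hc x)
  set f : A → A := fun x => ∑ i : Fin m, ι (c x i * nuP ζ ξ (i : ℕ)) * θ ^ (i : ℕ) with hf_def
  -- key formula, first for t < m
  have key0 : ∀ (a : F) (t : ℕ), t < m → f (ι a * θ ^ t) = ι (a * nuP ζ ξ t) * θ ^ t := by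
    intro a t ht
    have hd : c (ι a * θ ^ t) = fun i : Fin m => if (i : ℕ) = t then a else 0 := by
      refine (hcu _ _ ?_).symm
      rw [Finset.sum_eq_single (⟨t, ht⟩ : Fin m)]
      · simp
      · intro b _ hb
        have : (b : ℕ) ≠ t := by
          intro h; exact hb (Fin.ext h)
        simp [this]
      · simp
    simp only [hf_def, hd]
    rw [Finset.sum_eq_single (⟨t, ht⟩ : Fin m)]
    · simp
    · intro b _ hb
      have : (b : ℕ) ≠ t := by intro h; exact hb (Fin.ext h)
      simp [this]
    · simp
  -- general key formula
  have key : ∀ (a : F) (t : ℕ), f (ι a * θ ^ t) = ι (a * nuP ζ ξ t) * θ ^ t := by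
    intro a t
    have hsplit : θ ^ t = algebraMap k A (β ^ (t / m)) * θ ^ (t % m) := by
      conv_lhs => rw [← Nat.div_add_mod t m]
      rw [pow_add, pow_mul, hθm, map_pow]
    have hcomm : ∀ (b : F) (r : ℕ),
        ι b * (algebraMap k A (β ^ (t / m)) * θ ^ r)
          = ι (b * algebraMap k F (β ^ (t / m))) * θ ^ r := by
      intro b r
      rw [map_mul, ι.commutes, mul_assoc]
    have h1 : ι a * θ ^ t = ι (a * algebraMap k F (β ^ (t / m))) * θ ^ (t % m) := by
      rw [hsplit, hcomm]
    rw [h1, key0 _ _ (Nat.mod_lt t hm), hper t]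
    conv_rhs => rw [hsplit]
    rw [hcomm]
    have h2 : a * algebraMap k F (β ^ (t / m)) * nuP ζ ξ (t % m)
        = a * nuP ζ ξ (t % m) * algebraMap k F (β ^ (t / m)) := by ring
    rw [h2]
  -- additivity
  have f0 : f 0 = 0 := by
    have : c 0 = 0 := (hcu 0 0 (by simp)).symm
    simp [hf_def, this]
  have fadd : ∀ x y : A, f (x + y) = f x + f y := by
    intro x y
    have hcxy : c (x + y) = c x + c y := by
      refine (hcu _ _ ?_).symm
      conv_lhs => rw [hc x, hc y]
      rw [← Finset.sum_add_distrib]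
      refine Finset.sum_congr rfl fun i _ => ?_
      simp [add_mul]
    simp only [hf_def, hcxy, Pi.add_apply, add_mul, map_add, Finset.sum_add_distrib]
  set fM : A →+ A := AddMonoidHom.mk' f fadd with hfM
  -- multiplicativity
  have fmul : ∀ x y : A, f (x * y) = f x * f y := by
    intro x y
    conv_lhs => rw [hc x, hc y]
    rw [Finset.sum_mul_sum]
    have hprod : ∀ (a b : F) (i j : ℕ),
        (ι a * θ ^ i) * (ι b * θ ^ j) = ι (a * (ζ ^ i) b) * θ ^ (i + j) := by
      intro a b i j
      rw [mul_assoc, ← mul_assoc (θ ^ i), theta_pow_mul ζ ι θ hθa]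
      simp only [map_mul, pow_add, mul_assoc]
    have this : ∀ (i j : Fin m),
        (ι (c x i) * θ ^ (i : ℕ)) * (ι (c y j) * θ ^ (j : ℕ))
          = ι (c x i * (ζ ^ (i : ℕ)) (c y j)) * θ ^ ((i : ℕ) + (j : ℕ)) :=
      fun i j => hprod _ _ _ _
    have hL : f (∑ i : Fin m, ∑ j : Fin m,
        (ι (c x i) * θ ^ (i : ℕ)) * (ι (c y j) * θ ^ (j : ℕ)))
        = ∑ i : Fin m, ∑ j : Fin m,
            ι (c x i * (ζ ^ (i : ℕ)) (c y j) * nuP ζ ξ ((i : ℕ) + (j : ℕ)))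
              * θ ^ ((i : ℕ) + (j : ℕ)) := by
      rw [show f = fM from rfl, map_sum]
      refine Finset.sum_congr rfl fun i _ => ?_
      rw [map_sum]
      refine Finset.sum_congr rfl fun j _ => ?_
      rw [show (fM : A → A) = f from rfl, this i j, key]
    rw [hL]
    conv_rhs => rw [hf_def]
    rw [Finset.sum_mul_sum]
    refine Finset.sum_congr rfl fun i _ => Finset.sum_congr rfl fun j _ => ?_
    rw [hprod]
    have harg : c x i * (ζ ^ (i : ℕ)) (c y j) * nuP ζ ξ ((i : ℕ) + (j : ℕ))
        = c x i * nuP ζ ξ (i : ℕ) * (ζ ^ (i : ℕ)) (c y j * nuP ζ ξ (j : ℕ)) := by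
      rw [nuP_add, map_mul]; ring
    rw [harg]
  have f1 : f 1 = 1 := by
    have h1 : (1 : A) = ι 1 * θ ^ 0 := by simp
    rw [h1, key]
    simp [nuP]
  have fcomm : ∀ r : k, f (algebraMap k A r) = algebraMap k A r := by
    intro r
    have : algebraMap k A r = ι (algebraMap k F r) * θ ^ 0 := by
      simp [ι.commutes]
    rw [this, key]
    simp [nuP, ι.commutes]
  exact ⟨{ toFun := f, map_one' := f1, map_mul' := fmul, map_zero' := f0,
           map_add' := fadd, commutes' := fcomm }, key⟩

end Aux


/-- Let `A = A_β = F⟨θ⟩/(θ^m - β)` (presented as a `k`-algebra with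
embedding `ι : F → A`, element `θ` with the twisted relations and `F`-basis
`1, θ, …, θ^{m-1}`).  For `ξ ∈ F^×` with `Nm_{F/k}(ξ)` an `(m/n)`-th root of unity, there is
a unique `F`-algebra automorphism `μ_ξ` of `A` fixing `ι(F)` pointwise and sending
`θ ↦ ξ·θ`; it restricts on the center `k[θ^n]` to `θ^n ↦ Nm_{F/k}(ξ)·θ^n`. -/
theorem twist_automorphism_exists
    {k F A : Type*} [Field k] [Field F] [Algebra k F]
    [FiniteDimensional k F] [Algebra.IsSeparable k F]
    (ζ : F ≃ₐ[k] F) (n m : ℕ) (hn : 0 < n) (hord : orderOf ζ = n)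
    (hfix : ∀ x : F, ζ x = x ↔ x ∈ (algebraMap k F).range)
    (hgen : ∀ g : F ≃ₐ[k] F, g ∈ Subgroup.zpowers ζ)
    (hnm : n ∣ m)
    (β : k) (hβ : β ≠ 0)
    [Ring A] [Algebra k A] (ι : F →ₐ[k] A) (θ : A)
    (hθa : ∀ a : F, θ * ι a = ι (ζ a) * θ)
    (hθm : θ ^ m = algebraMap k A β)
    (hbasis : ∀ x : A, ∃! c : Fin m → F, x = ∑ i : Fin m, ι (c i) * θ ^ (i : ℕ))
    (ξ : F) (hξ : ξ ≠ 0) (hnorm : Algebra.norm k ξ ^ (m / n) = 1) :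
    ∃ μ : A ≃ₐ[k] A,
      (∀ a : F, μ (ι a) = ι a) ∧
      μ θ = ι ξ * θ ∧
      μ (θ ^ n) = ι (algebraMap k F (Algebra.norm k ξ)) * θ ^ n ∧
      ∀ μ' : A ≃ₐ[k] A, (∀ a : F, μ' (ι a) = ι a) → μ' θ = ι ξ * θ → μ' = μ := by
    classical
  rcases Nat.eq_zero_or_pos m with hm0 | hm
  · subst hm0
    obtain ⟨c, hc1, -⟩ := hbasis 1
    simp only [Finset.univ_eq_empty, Finset.sum_empty] at hc1
    haveI : Subsingleton A := subsingleton_of_zero_eq_one hc1.symm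
    refine ⟨AlgEquiv.refl, fun a => Subsingleton.elim _ _, Subsingleton.elim _ _,
      Subsingleton.elim _ _, fun μ' _ _ => ?_⟩
    exact AlgEquiv.ext fun x => Subsingleton.elim _ _
  have hζm : ζ ^ m = 1 := orderOf_dvd_iff_pow_eq_one.mp (hord ▸ hnm)
  haveI : IsGalois k F := by
    apply IsGalois.of_fixedField_eq_bot
    ext x
    rw [IntermediateField.mem_bot]
    constructor
    · intro hx
      have h1 : ζ • x = x := hx ⟨ζ, Subgroup.mem_top ζ⟩
      rw [AlgEquiv.smul_def] at h1
      exact (hfix x).1 h1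
    · rintro ⟨y, rfl⟩
      rintro ⟨g, -⟩
      exact g.commutes y
  -- the group is enumerated by powers of ζ
  have hbij : Function.Bijective (fun j : Fin n => ζ ^ (j : ℕ)) := by
    constructor
    · intro i j hij
      exact Fin.ext (pow_injOn_Iio_orderOf (by rw [hord]; exact i.isLt)
        (by rw [hord]; exact j.isLt) hij)
    · intro g
      obtain ⟨z, hz⟩ := Subgroup.mem_zpowers_iff.mp (hgen g)
      have h0 : (0:ℤ) ≤ z % n := Int.emod_nonneg z (by exact_mod_cast hn.ne')
      have h1 : z % n < n := Int.emod_lt_of_pos z (by exact_mod_cast hn)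
      refine ⟨⟨(z % (n:ℤ)).toNat, by omega⟩, ?_⟩
      have h2 : ζ ^ (((z % (n:ℤ)).toNat : ℕ)) = ζ ^ (z % (n:ℤ)) := by
        rw [← zpow_natCast, Int.toNat_of_nonneg h0]
      have h3 : ζ ^ (z % (n:ℤ)) = ζ ^ z := by
        conv_lhs => rw [← hord]
        exact zpow_mod_orderOf ζ z
      simpa [h2, h3] using hz
  have hnun : nuP ζ ξ n = algebraMap k F (Algebra.norm k ξ) := by
    rw [Algebra.norm_eq_prod_automorphisms, nuP,
      ← Fin.prod_univ_eq_prod_range (fun j => (ζ ^ j) ξ) n]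
    exact Fintype.prod_bijective _ hbij _ _ (fun j => rfl)
  have hnuq : ∀ q : ℕ, nuP ζ ξ (n * q) = nuP ζ ξ n ^ q := by
    intro q
    induction q with
    | zero => simp [nuP]
    | succ q ih =>
      rw [Nat.mul_succ, nuP_add, ih, pow_mul]
      rw [show ζ ^ n = 1 from by rw [← hord]; exact pow_orderOf_eq_one ζ]
      rw [one_pow, pow_succ]
      rfl
  have hν : nuP ζ ξ m = 1 := by
    obtain ⟨q, rfl⟩ := hnm
    rw [Nat.mul_div_cancel_left q hn] at hnorm
    rw [hnuq, hnun, ← map_pow, hnorm, map_one]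
  have hnu_ne : ∀ t : ℕ, nuP ζ ξ t ≠ 0 := by
    intro t
    refine Finset.prod_ne_zero_iff.mpr fun j _ => ?_
    exact fun h => hξ ((map_eq_zero_iff (ζ ^ j) (ζ ^ j).injective).mp h)
  have hνi : ∀ t : ℕ, nuP ζ ξ⁻¹ t = (nuP ζ ξ t)⁻¹ := by
    intro t
    rw [nuP, nuP, ← Finset.prod_inv_distrib]
    exact Finset.prod_congr rfl fun j _ => map_inv₀ (ζ ^ j : F ≃ₐ[k] F) ξ
  obtain ⟨g, hg⟩ := exists_hom ζ m hm hζm β ι θ hθa hθm hbasis ξ hν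
  obtain ⟨g', hg'⟩ := exists_hom ζ m hm hζm β ι θ hθa hθm hbasis ξ⁻¹
    (by rw [hνi, hν, inv_one])
  have hbase : ∀ x : A, ∃ c : Fin m → F, x = ∑ i : Fin m, ι (c i) * θ ^ (i : ℕ) :=
    fun x => (hbasis x).exists
  have hgg' : ∀ x, g (g' x) = x := by
    intro x
    obtain ⟨c, rfl⟩ := hbase x
    rw [map_sum, map_sum]
    refine Finset.sum_congr rfl fun i _ => ?_
    rw [hg', hg, hνi, mul_assoc, inv_mul_cancel₀ (hnu_ne _), mul_one]
  have hg'g : ∀ x, g' (g x) = x := by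
    intro x
    obtain ⟨c, rfl⟩ := hbase x
    rw [map_sum, map_sum]
    refine Finset.sum_congr rfl fun i _ => ?_
    rw [hg, hg', hνi, mul_assoc, mul_inv_cancel₀ (hnu_ne _), mul_one]
  set μ : A ≃ₐ[k] A := AlgEquiv.ofAlgHom g g' (AlgHom.ext hgg') (AlgHom.ext hg'g) with hμdef
  have hμapp : ∀ x, μ x = g x := fun _ => rfl
  have hμι : ∀ a : F, μ (ι a) = ι a := by
    intro a
    rw [hμapp]
    simpa [nuP] using hg a 0
  have hμθ : μ θ = ι ξ * θ := by
    rw [hμapp]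
    simpa [nuP] using hg 1 1
  have hμθn : μ (θ ^ n) = ι (algebraMap k F (Algebra.norm k ξ)) * θ ^ n := by
    rw [hμapp]
    have := hg 1 n
    rw [map_one, one_mul, one_mul, hnun] at this
    exact this
  have hpow : ∀ t : ℕ, (ι ξ * θ) ^ t = ι (nuP ζ ξ t) * θ ^ t := by
    intro t
    induction t with
    | zero => simp [nuP]
    | succ t ih =>
      have h3 : nuP ζ ξ (t + 1) = ξ * ζ (nuP ζ ξ t) := by
        rw [Nat.add_comm, nuP_add]
        simp [nuP]
      rw [pow_succ', ih]
      rw [show ι ξ * θ * (ι (nuP ζ ξ t) * θ ^ t) = ι ξ * (θ * ι (nuP ζ ξ t)) * θ ^ t from by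
        simp [mul_assoc]]
      rw [hθa, h3, map_mul, pow_succ']
      simp [mul_assoc]
  refine ⟨μ, hμι, hμθ, hμθn, ?_⟩
  intro μ' h1 h2
  apply AlgEquiv.ext
  intro x
  obtain ⟨c, rfl⟩ := hbase x
  rw [map_sum, map_sum]
  refine Finset.sum_congr rfl fun i _ => ?_
  rw [map_mul, map_pow, h1, h2, hpow, hμapp, hg, map_mul, mul_assoc]
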